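/- If δ is a dissimilarity map quartet consistent with a binary phylogenetic X-tree T and (a,b) is a cherry of T, then b is visible from a with respect to δ; that is, b uniquely maximizes Z_δ(a,x) over all x ≠ a. -/

import Mathlib

open Finset
open scoped Classical

/-- `w_δ(ij:kl) = (1/2)(δ(i,k)+δ(i,l)+δ(j,k)+δ(j,l)) - δ(i,j) - δ(k,l)`. -/
noncomputable def njw {X : Type*} (δ : X → X → ℝ) (i j k l : X) : ℝ :=
  (δ i k + δ i l + δ j k + δ j l) / 2 - δ i j - δ k l

/-- Edge `e` (with split side `σ e`) separates the pair `p,q` from the pair `r,s`. -/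
def sepE {X E : Type*} (σ : E → Finset X) (e : E) (p q r s : X) : Prop :=
  (p ∈ σ e ∧ q ∈ σ e ∧ r ∉ σ e ∧ s ∉ σ e) ∨
  (p ∉ σ e ∧ q ∉ σ e ∧ r ∈ σ e ∧ s ∈ σ e)

/-- `(ij:kl)` is a quartet of the tree encoded by the split system `σ`:
some internal edge separates `{i,j}` from `{k,l}`. -/
def isQuartet {X E : Type*} (σ : E → Finset X) (i j k l : X) : Prop :=
  ∃ e, sepE σ e i j k l

/-- Pairwise compatibility of the splits: the condition under which a split system
is exactly the split system of a (phylogenetic) tree. -/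
def splitsCompatible {X E : Type*} [Fintype X] (σ : E → Finset X) : Prop :=
  ∀ e f, σ e ⊆ σ f ∨ σ f ⊆ σ e ∨ (∀ a, a ∈ σ e → a ∉ σ f) ∨ (∀ a, a ∈ σ e ∨ a ∈ σ f)

/-- A dissimilarity map `δ` is quartet consistent with the tree encoded by `σ`. -/
def quartetConsistent {X E : Type*} (σ : E → Finset X) (δ : X → X → ℝ) : Prop :=
  ∀ i j k l : X, i ≠ j → i ≠ k → i ≠ l → j ≠ k → j ≠ l → k ≠ l →
    isQuartet σ i j k l →
      njw δ i j k l > max (njw δ i k j l) (njw δ i l j k)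

/-- The scaled Z-criterion `Z_δ(i,j) = ∑_{{k,l} ⊆ X\{i,j}} w_δ(ij:kl)`
(sum over unordered pairs, written as half the sum over ordered pairs). -/
noncomputable def njZ {X : Type*} [Fintype X] [DecidableEq X]
    (δ : X → X → ℝ) (i j : X) : ℝ :=
  (1 / 2) * ∑ k ∈ (Finset.univ.erase i).erase j,
    ∑ l ∈ ((Finset.univ.erase i).erase j).erase k, njw δ i j k l

/-- `(x,y)` is a cherry of the tree encoded by `σ`: some edge induces the split
`{x,y} | X \ {x,y}`. -/
def isCherry {X E : Type*} [Fintype X] [DecidableEq X]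
    (σ : E → Finset X) (x y : X) : Prop :=
  x ≠ y ∧ ∃ e, σ e = {x, y} ∨ σ e = ({x, y} : Finset X)ᶜ

lemma sum_pair_decomp {X : Type*} [DecidableEq X] (A : Finset X) (x : X) (hx : x ∈ A)
    (F : X → X → ℝ) :
    ∑ k ∈ A, ∑ l ∈ A.erase k, F k l =
      (∑ k ∈ A.erase x, ∑ l ∈ (A.erase x).erase k, F k l)
        + ∑ k ∈ A.erase x, (F k x + F x k) := by
  have h1 : ∀ k ∈ A.erase x, ∑ l ∈ A.erase k, F k l
      = (∑ l ∈ (A.erase x).erase k, F k l) + F k x := by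
    intro k hk
    have hkx : k ≠ x := Finset.ne_of_mem_erase hk
    have hxk : x ∈ A.erase k := Finset.mem_erase.2 ⟨hkx.symm, hx⟩
    rw [← Finset.sum_erase_add (A.erase k) _ hxk, Finset.erase_right_comm]
  rw [← Finset.sum_erase_add A _ hx, Finset.sum_congr rfl h1,
      Finset.sum_add_distrib, Finset.sum_add_distrib]
  ring

/-- Visibility: if `δ` is quartet consistent with the tree `σ` and `(a,b)`
is a cherry, then `b` uniquely maximizes `Z_δ(a,·)`: `Z_δ(a,b) > Z_δ(a,x)` for all
`x ∉ {a,b}`. -/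
theorem statement_9 {X E : Type*} [Fintype X] [DecidableEq X]
    (hn : 4 ≤ Fintype.card X)
    (σ : E → Finset X)
    (hcompat : splitsCompatible σ)
    (hnontriv : ∀ e, (σ e).Nonempty ∧ σ e ≠ Finset.univ)
    (δ : X → X → ℝ)
    (hsym : ∀ x y, δ x y = δ y x) (hdiag : ∀ x, δ x x = 0)
    (hqc : quartetConsistent σ δ)
    (a b : X) (hcherry : isCherry σ a b) :
    ∀ x : X, x ≠ a → x ≠ b → njZ δ a b > njZ δ a x := by
  intro x hxa hxb
  obtain ⟨hab, e, he⟩ := hcherry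
  have hba : b ≠ a := hab.symm
  set A := (Finset.univ.erase a).erase b with hA
  set B := (Finset.univ.erase a).erase x with hB
  have hxA : x ∈ A := Finset.mem_erase.2 ⟨hxb, Finset.mem_erase.2 ⟨hxa, Finset.mem_univ x⟩⟩
  have hbB : b ∈ B := Finset.mem_erase.2 ⟨hxb.symm, Finset.mem_erase.2 ⟨hba, Finset.mem_univ b⟩⟩
  set S := A.erase x with hSdef
  have hBb : B.erase b = S := by rw [hSdef, hA, hB, Finset.erase_right_comm]
  set f : X → ℝ := fun k => (δ b k - δ x k) / 2 + (δ a x - δ a b) / 2 with hf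
  set T := ∑ k ∈ S, f k with hT
  -- membership facts
  have memS : ∀ k ∈ S, k ≠ a ∧ k ≠ b ∧ k ≠ x := by
    intro k hk
    rw [hSdef, hA] at hk
    simp only [Finset.mem_erase, Finset.mem_univ, and_true] at hk
    exact ⟨hk.2.2, hk.2.1, hk.1⟩
  -- each f k is positive by quartet consistency on {a,b,x,k}
  have hfpos : ∀ k ∈ S, 0 < f k := by
    intro k hk
    obtain ⟨hka, hkb, hkx⟩ := memS k hk
    have hq : isQuartet σ a b x k := by
      refine ⟨e, ?_⟩
      rcases he with he | he
      · exact Or.inl ⟨by simp [he], by simp [he], by simp [he, hxa, hxb],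
          by simp [he, hka, hkb]⟩
      · exact Or.inr ⟨by simp [he], by simp [he], by simp [he, hxa, hxb],
          by simp [he, hka, hkb]⟩
    have h := hqc a b x k hab hxa.symm hka.symm hxb.symm hkb.symm hkx.symm hq
    have h2 : njw δ a x b k < njw δ a b x k := lt_of_le_of_lt (le_max_left _ _) h
    have h3 : njw δ a b x k - njw δ a x b k = 3 * f k := by
      simp only [njw, hf]; rw [hsym x b]; ring
    linarith
  -- cardinality of S
  have c1 : (Finset.univ.erase a).card = Fintype.card X - 1 := by
    rw [Finset.card_erase_of_mem (Finset.mem_univ a), Finset.card_univ]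
  have hbA' : b ∈ Finset.univ.erase a := Finset.mem_erase.2 ⟨hba, Finset.mem_univ b⟩
  have c2 : A.card = Fintype.card X - 1 - 1 := by
    rw [hA, Finset.card_erase_of_mem hbA', c1]
  have c3 : S.card = Fintype.card X - 1 - 1 - 1 := by
    rw [hSdef, Finset.card_erase_of_mem hxA, c2]
  have hSne : S.Nonempty := Finset.card_pos.1 (by omega)
  have hScard1 : 1 ≤ S.card := Finset.card_pos.2 hSne
  have hTpos : 0 < T := Finset.sum_pos hfpos hSne
  -- the decompositions
  have hZb : njZ δ a b = (1 / 2) * ((∑ k ∈ S, ∑ l ∈ S.erase k, njw δ a b k l)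
      + ∑ k ∈ S, (njw δ a b k x + njw δ a b x k)) := by
    simp only [njZ, ← hA]
    rw [sum_pair_decomp A x hxA]
  have hZx : njZ δ a x = (1 / 2) * ((∑ k ∈ S, ∑ l ∈ S.erase k, njw δ a x k l)
      + ∑ k ∈ S, (njw δ a x k b + njw δ a x b k)) := by
    simp only [njZ, ← hB]
    rw [sum_pair_decomp B b hbB, hBb]
  -- the double sum difference
  have hsum1 : (∑ k ∈ S, ∑ l ∈ S.erase k, njw δ a b k l)
      - (∑ k ∈ S, ∑ l ∈ S.erase k, njw δ a x k l)
      = (2 * (S.card : ℝ) - 2) * T := by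
    rw [← Finset.sum_sub_distrib]
    have hmain : ∀ k ∈ S, (∑ l ∈ S.erase k, njw δ a b k l)
        - (∑ l ∈ S.erase k, njw δ a x k l)
        = ((S.card : ℝ) - 1) * f k + (T - f k) := by
      intro k hk
      rw [← Finset.sum_sub_distrib]
      have hpt : ∀ l ∈ S.erase k, njw δ a b k l - njw δ a x k l = f k + f l := by
        intro l _
        simp only [njw, hf]; ring
      rw [Finset.sum_congr rfl hpt, Finset.sum_add_distrib, Finset.sum_const,
        Finset.card_erase_of_mem hk, Finset.sum_erase_eq_sub hk, ← hT,
        nsmul_eq_mul, Nat.cast_sub hScard1, Nat.cast_one]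
    rw [Finset.sum_congr rfl hmain, Finset.sum_add_distrib, Finset.sum_sub_distrib,
      ← Finset.mul_sum, ← hT, Finset.sum_const, nsmul_eq_mul]
    ring
  -- the singleton sum difference
  have hsum2 : (∑ k ∈ S, (njw δ a b k x + njw δ a b x k))
      - (∑ k ∈ S, (njw δ a x k b + njw δ a x b k)) = 6 * T := by
    rw [← Finset.sum_sub_distrib]
    have hpt : ∀ k ∈ S, (njw δ a b k x + njw δ a b x k)
        - (njw δ a x k b + njw δ a x b k) = 6 * f k := by
      intro k hk
      simp only [njw, hf]
      rw [hsym k x, hsym x b, hsym k b]; ring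
    rw [Finset.sum_congr rfl hpt, ← Finset.mul_sum, ← hT]
  have key : njZ δ a b - njZ δ a x = ((S.card : ℝ) + 2) * T := by
    rw [hZb, hZx]
    have : (0:ℝ) < (S.card : ℝ) := by exact_mod_cast hScard1
    nlinarith [hsum1, hsum2]
  have hcoef : (0:ℝ) < (S.card : ℝ) + 2 := by positivity
  nlinarith [mul_pos hcoef hTpos]
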